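/- Let (W, φ) be a quadratic space over the finite field 𝔽_q (q odd) of dimension n whose radical has codimension r (so the rank of φ is r), and let φ₀ be the restriction of φ to a complement of the radical. Then the Gauss sum Γ(W,φ) = Σ_{w∈W} χ(φ(w)) equals q^{n−r} · ψ(det φ₀) · G^r, where χ(u) = exp(2πi Tr(u)/p), ψ is the quadratic character of 𝔽_q^×, and G = Σ_{x∈𝔽_q} χ(x²). -/

import Mathlib

noncomputable section

/-- The standard additive character `χ(u) = exp(2πi Tr(u)/p)` of a finite field of
characteristic `p`, where `Tr` is the trace to the prime field. -/
def chiF (F : Type) [Field F] [Fintype F] (u : F) : ℂ :=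
  letI : Algebra (ZMod (ringChar F)) F := ZMod.algebra F (ringChar F)
  Complex.exp (2 * Real.pi * Complex.I *
    ((Algebra.trace (ZMod (ringChar F)) F u).val : ℂ) / (ringChar F : ℂ))

/-- The Gauss sum of a quadratic form `φ` on a finite `F`-vector space `W`. -/
def GaussSum (F : Type) [Field F] [Fintype F] (W : Type) [AddCommGroup W] [Module F W]
    [Fintype W] (φ : QuadraticForm F W) : ℂ :=
  ∑ w : W, chiF F (φ w)

/-- The quadratic character of `𝔽_q^×` (extended by `0` at `0`). -/
def psiF (F : Type) [Field F] [Fintype F] (a : F) : ℂ :=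
  letI : Decidable (a = 0) := Classical.propDecidable _
  letI : Decidable (IsSquare a) := Classical.propDecidable _
  if a = 0 then 0 else if IsSquare a then 1 else -1


section Aux

variable {F : Type} [Field F] [Fintype F]

omit [Fintype F] in
lemma addChar_sum {ι : Type*} (E : AddChar F ℂ) (s : Finset ι) (f : ι → F) :
    E (∑ i ∈ s, f i) = ∏ i ∈ s, E (f i) := by
  induction s using Finset.cons_induction with
  | empty => simp
  | cons a s ha ih => rw [Finset.sum_cons, Finset.prod_cons, AddChar.map_add_eq_mul, ih]

variable [DecidableEq F]

lemma psiF_eq (a : F) : psiF F a = ((quadraticChar F a : ℤ) : ℂ) := by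
  simp only [psiF, quadraticChar_apply, quadraticCharFun]
  split_ifs <;> simp_all

lemma card_sqrts (hF : ringChar F ≠ 2) (u : F) :
    ((Finset.univ.filter fun x : F => x ^ 2 = u).card : ℂ)
      = ((quadraticChar F u : ℤ) : ℂ) + 1 := by
  have h := quadraticChar_card_sqrts hF u
  have : {x : F | x ^ 2 = u}.toFinset = Finset.univ.filter fun x : F => x ^ 2 = u := by
    ext x; simp
  rw [this] at h
  exact_mod_cast congrArg (fun z : ℤ => (z : ℂ)) h

lemma key_sum (hF : ringChar F ≠ 2) (E : AddChar F ℂ) (hE : E ≠ 1) {a : F} (ha : a ≠ 0) :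
    ∑ x : F, E (a * x ^ 2) = ((quadraticChar F a : ℤ) : ℂ) * ∑ x : F, E (x ^ 2) := by
  have step : ∀ c : F, c ≠ 0 → ∑ x : F, E (c * x ^ 2)
      = ∑ u : F, (((quadraticChar F u : ℤ) : ℂ) + 1) * E (c * u) := by
    intro c hc
    rw [← Finset.sum_fiberwise Finset.univ (fun x : F => x ^ 2) (fun x => E (c * x ^ 2))]
    refine Finset.sum_congr rfl fun u _ => ?_
    have hcongr : ∑ x ∈ Finset.univ.filter (fun x : F => x ^ 2 = u), E (c * x ^ 2)
        = ∑ _x ∈ Finset.univ.filter (fun x : F => x ^ 2 = u), E (c * u) :=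
      Finset.sum_congr rfl fun x hx => by
        simp only [Finset.mem_filter] at hx; rw [hx.2]
    rw [hcongr, Finset.sum_const, nsmul_eq_mul, card_sqrts hF u]
  have shift : ∀ c : F, c ≠ 0 → ∑ u : F, E (c * u) = 0 := by
    intro c hc
    rw [← AddChar.sum_eq_zero_of_ne_one hE]
    exact Fintype.sum_equiv (Equiv.mulLeft₀ c hc) _ _ fun u => rfl
  have expand : ∀ c : F, c ≠ 0 → ∑ x : F, E (c * x ^ 2)
      = ∑ u : F, ((quadraticChar F u : ℤ) : ℂ) * E (c * u) := by
    intro c hc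
    rw [step c hc]
    simp only [add_mul, one_mul, Finset.sum_add_distrib, shift c hc, add_zero]
  have sub : ∑ u : F, ((quadraticChar F u : ℤ) : ℂ) * E (a * u)
      = ((quadraticChar F a : ℤ) : ℂ) * ∑ u : F, ((quadraticChar F u : ℤ) : ℂ) * E u := by
    rw [Finset.mul_sum]
    refine Fintype.sum_equiv (Equiv.mulLeft₀ a ha) _ _ fun u => ?_
    show _ = _ * (((quadraticChar F (a * u) : ℤ) : ℂ) * E (a * u))
    rcases eq_or_ne u 0 with rfl | hu
    · simp
    · have hsq : ((quadraticChar F a : ℤ) : ℂ) * ((quadraticChar F a : ℤ) : ℂ) = 1 := by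
        have := quadraticChar_sq_one (F := F) ha
        rw [pow_two] at this
        exact_mod_cast congrArg (fun z : ℤ => (z : ℂ)) this
      have : ((quadraticChar F (a * u) : ℤ) : ℂ)
          = ((quadraticChar F a : ℤ) : ℂ) * ((quadraticChar F u : ℤ) : ℂ) := by
        rw [map_mul]; push_cast; ring
      rw [this]
      rw [← mul_assoc, ← mul_assoc, hsq, one_mul]
  have e1 := expand 1 one_ne_zero
  simp only [one_mul] at e1
  rw [expand a ha, sub, ← e1]

end Aux

open scoped Classical in
/-- Gauss sum of a quadratic form on a finite-field vector space: if `φ` is diagonalized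
by a basis `b` with coefficients `d i` (so the radical is spanned by the `b i` with
`d i = 0` and the rank is `r`), then `Γ(W,φ) = q^{n-r} ψ(det φ₀) G^r`. -/
theorem stmt_2 (F : Type) [Field F] [Fintype F] (hodd : Odd (Fintype.card F))
    (W : Type) [AddCommGroup W] [Module F W] [Fintype W]
    (n : ℕ) (b : Module.Basis (Fin n) F W)
    (φ : QuadraticForm F W) (d : Fin n → F)
    (hdiag : ∀ v : W, φ v = ∑ i, d i * (b.repr v i) ^ 2)
    (r : ℕ) (hr : r = (Finset.univ.filter fun i => d i ≠ 0).card) :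
    GaussSum F W φ =
      (Fintype.card F : ℂ) ^ (n - r)
        * psiF F (∏ i ∈ Finset.univ.filter fun i => d i ≠ 0, d i)
        * (∑ x : F, chiF F (x ^ 2)) ^ r := by
  classical
  have hp2 : ringChar F ≠ 2 := by
    intro h
    have h2 := FiniteField.even_card_of_char_two h
    rcases hodd with ⟨k, hk⟩
    omega
  haveI : Fact (ringChar F).Prime := ⟨CharP.char_is_prime F _⟩
  haveI : NeZero (ringChar F) := ⟨(Fact.out (p := (ringChar F).Prime)).ne_zero⟩
  letI : Algebra (ZMod (ringChar F)) F := ZMod.algebra F (ringChar F)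
  set E : AddChar F ℂ :=
    (ZMod.stdAddChar (N := ringChar F)).compAddMonoidHom
      (Algebra.trace (ZMod (ringChar F)) F).toAddMonoidHom with hEdef
  have hchi : ∀ u : F, chiF F u = E u := by
    intro u
    rw [chiF, hEdef, AddChar.compAddMonoidHom_apply, ZMod.stdAddChar_apply,
      ZMod.toCircle_apply]
    rfl
  have hE1 : E ≠ 1 := by
    obtain ⟨c, hc⟩ := FiniteField.trace_to_zmod_nondegenerate F (one_ne_zero (α := F))
    rw [one_mul] at hc
    intro h
    apply hc
    have h1 : E c = 1 := by rw [h]; rfl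
    rw [hEdef, AddChar.compAddMonoidHom_apply] at h1
    have h0 : ZMod.stdAddChar (N := ringChar F) 0 = 1 := AddChar.map_zero_eq_one _
    exact ZMod.injective_stdAddChar (h1.trans h0.symm)
  -- main computation
  have hG : (∑ x : F, chiF F (x ^ 2)) = ∑ x : F, E (x ^ 2) := by
    exact Finset.sum_congr rfl fun x _ => hchi _
  have hcardfin : (Finset.univ.filter fun i : Fin n => ¬ d i ≠ 0).card = n - r := by
    have := Finset.card_filter_add_card_filter_not
      (s := (Finset.univ : Finset (Fin n))) (p := fun i => d i ≠ 0)
    simp only [Finset.card_univ, Fintype.card_fin] at this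
    omega
  calc GaussSum F W φ
      = ∑ w : W, ∏ i, E (d i * (b.repr w i) ^ 2) := by
        refine Finset.sum_congr rfl fun w _ => ?_
        rw [hchi, hdiag w, addChar_sum]
    _ = ∑ c : Fin n → F, ∏ i, E (d i * (c i) ^ 2) := by
        refine Fintype.sum_equiv b.equivFun.toEquiv _ _ fun w => ?_
        exact Finset.prod_congr rfl fun i _ => rfl
    _ = ∏ i, ∑ x : F, E (d i * x ^ 2) := by
        rw [Finset.prod_univ_sum, Fintype.piFinset_univ]
    _ = (∏ i ∈ Finset.univ.filter fun i => d i ≠ 0, ∑ x : F, E (d i * x ^ 2)) *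
        (∏ i ∈ Finset.univ.filter fun i => ¬ d i ≠ 0, ∑ x : F, E (d i * x ^ 2)) :=
        (Finset.prod_filter_mul_prod_filter_not _ _ _).symm
    _ = (∏ i ∈ Finset.univ.filter fun i => d i ≠ 0,
          ((quadraticChar F (d i) : ℤ) : ℂ) * ∑ x : F, E (x ^ 2)) *
        ((Fintype.card F : ℂ) ^ (n - r)) := by
        congr 1
        · exact Finset.prod_congr rfl fun i hi => by
            have hdi : d i ≠ 0 := (Finset.mem_filter.mp hi).2
            exact key_sum hp2 E hE1 hdi
        · rw [Finset.prod_congr rfl (fun i hi => ?_), Finset.prod_const, hcardfin]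
          have hdi : d i = 0 := not_not.mp (Finset.mem_filter.mp hi).2
          simp [hdi, Finset.card_univ]
    _ = (Fintype.card F : ℂ) ^ (n - r)
        * psiF F (∏ i ∈ Finset.univ.filter fun i => d i ≠ 0, d i)
        * (∑ x : F, chiF F (x ^ 2)) ^ r := by
        rw [Finset.prod_mul_distrib, Finset.prod_const, ← hr, hG]
        rw [psiF_eq]
        have : ((quadraticChar F (∏ i ∈ Finset.univ.filter fun i => d i ≠ 0, d i) : ℤ) : ℂ)
            = ∏ i ∈ Finset.univ.filter fun i => d i ≠ 0,
                ((quadraticChar F (d i) : ℤ) : ℂ) := by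
          rw [map_prod]; push_cast; rfl
        rw [this]; ring


end
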